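/- Let 1 < p ≤ q < ∞ and σ a locally finite measure on ℝⁿ, D a dyadic grid, and D_λ (for λ > 0) any pairwise-disjoint collection of dyadic cubes. Then ∑_{Q∈D_λ} σ(Q)^{q/p} (⟨f⟩_Q^σ)^q ≲ ‖f‖_{L^p(σ)}^q, where ⟨f⟩_Q^σ = (1/σ(Q))∫_Q |f|dσ, with implied constant depending only on p and q. More generally, the sequence a_Q = σ(Q)^{q/p} restricted to any pairwise-disjoint family is a (p,q)-Carleson sequence with respect to σ. -/

import Mathlib

open MeasureTheory Set ENNReal

noncomputable section

/-- An axis-parallel cube in `ℝⁿ`. -/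
structure Cube (n : ℕ) where
  corner : Fin n → ℝ
  side : ℝ
  side_pos : 0 < side

namespace Cube

/-- The underlying (half-open) set of a cube. -/
def toSet {n : ℕ} (Q : Cube n) : Set (Fin n → ℝ) :=
  {x | ∀ i, Q.corner i ≤ x i ∧ x i < Q.corner i + Q.side}

/-- The volume `|Q| = side^n` of a cube. -/
def vol {n : ℕ} (Q : Cube n) : ℝ := Q.side ^ n

end Cube

/-- A dyadic grid: cubes of dyadic side lengths, nested or disjoint, partitioning `ℝⁿ`
at every scale. -/
def IsDyadicGrid {n : ℕ} (D : Set (Cube n)) : Prop :=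
  (∀ Q ∈ D, ∃ k : ℤ, Q.side = 2 ^ k) ∧
  (∀ Q ∈ D, ∀ R ∈ D, (Q.toSet ∩ R.toSet).Nonempty →
      Q.toSet ⊆ R.toSet ∨ R.toSet ⊆ Q.toSet) ∧
  (∀ k : ℤ, (⋃ Q ∈ {Q ∈ D | Q.side = 2 ^ k}, Q.toSet) = univ)

/-- The average `⟨f⟩_Q^μ = (1/μ(Q)) ∫_Q f dμ`. -/
def avg {n : ℕ} (μ : Measure (Fin n → ℝ)) (f : (Fin n → ℝ) → ℝ≥0∞) (Q : Cube n) : ℝ≥0∞ :=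
  (∫⁻ x in Q.toSet, f x ∂μ) / μ Q.toSet

/-- The Lebesgue average `⟨f⟩_Q = (1/|Q|) ∫_Q f`. -/
def lebAvg {n : ℕ} (f : (Fin n → ℝ) → ℝ≥0∞) (Q : Cube n) : ℝ≥0∞ :=
  (∫⁻ x in Q.toSet, f x) / ENNReal.ofReal Q.vol

/-- `σ(Q) = ∫_Q σ dx`. -/
def wt {n : ℕ} (σ : (Fin n → ℝ) → ℝ≥0∞) (Q : Cube n) : ℝ≥0∞ :=
  ∫⁻ x in Q.toSet, σ x

/-- The weighted average `⟨f⟩_Q^σ = (1/σ(Q)) ∫_Q f σ dx`. -/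
def avgw {n : ℕ} (σ f : (Fin n → ℝ) → ℝ≥0∞) (Q : Cube n) : ℝ≥0∞ :=
  (∫⁻ x in Q.toSet, f x * σ x) / wt σ Q

/-- The dyadic fractional maximal operator `M_α^D`. -/
def dyFracMax {n : ℕ} (D : Set (Cube n)) (α : ℝ) (f : (Fin n → ℝ) → ℝ≥0∞)
    (x : Fin n → ℝ) : ℝ≥0∞ :=
  ⨆ (Q : Cube n) (_ : Q ∈ D) (_ : x ∈ Q.toSet),
    ENNReal.ofReal (Q.vol ^ (α / (n : ℝ))) * lebAvg f Q

/-- The fractional maximal operator `M_α` (supremum over all cubes). -/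
def fracMax {n : ℕ} (α : ℝ) (f : (Fin n → ℝ) → ℝ≥0∞) (x : Fin n → ℝ) : ℝ≥0∞ :=
  ⨆ (Q : Cube n) (_ : x ∈ Q.toSet), ENNReal.ofReal (Q.vol ^ (α / (n : ℝ))) * lebAvg f Q

/-- The Hardy–Littlewood maximal operator (over all cubes). -/
def hlMax {n : ℕ} (f : (Fin n → ℝ) → ℝ≥0∞) (x : Fin n → ℝ) : ℝ≥0∞ :=
  ⨆ (Q : Cube n) (_ : x ∈ Q.toSet), lebAvg f Q

/-- The entropy functional `ρ_σ(Q) = (1/σ(Q)) ∫_Q M(σ 1_Q)`. -/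
def entropy {n : ℕ} (σ : (Fin n → ℝ) → ℝ≥0∞) (Q : Cube n) : ℝ≥0∞ :=
  (∫⁻ x in Q.toSet, hlMax (Q.toSet.indicator σ) x) / wt σ Q

/-- The fractional integral operator `I_α f (x) = ∫ f(y) |x-y|^{α-n} dy`. -/
def fracInt {n : ℕ} (α : ℝ) (f : (Fin n → ℝ) → ℝ≥0∞) (x : Fin n → ℝ) : ℝ≥0∞ :=
  ∫⁻ y, f y * ENNReal.ofReal (Real.sqrt (∑ i, (x i - y i) ^ 2) ^ (α - (n : ℝ)))

/-- `Q` is a maximal element of `S` strictly contained in `P`. -/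
def IsMaxChild {n : ℕ} (S : Set (Cube n)) (P Q : Cube n) : Prop :=
  Q ∈ S ∧ Q.toSet ⊂ P.toSet ∧
    ∀ R ∈ S, R.toSet ⊂ P.toSet → Q.toSet ⊆ R.toSet → R.toSet ⊆ Q.toSet

/-- A sparse collection of cubes: the maximal elements strictly inside any `P` in the
collection have total volume at most `|P|/2`. -/
def IsSparse {n : ℕ} (S : Set (Cube n)) : Prop :=
  ∀ P ∈ S, (∑' Q : {Q : Cube n // IsMaxChild S P Q}, ENNReal.ofReal Q.1.vol)
      ≤ ENNReal.ofReal P.vol / 2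

/-- `P` is the `S`-parent of `Q`: the minimal element of `S` containing `Q`. -/
def IsSParent {n : ℕ} (S : Set (Cube n)) (Q P : Cube n) : Prop :=
  P ∈ S ∧ Q.toSet ⊆ P.toSet ∧ ∀ R ∈ S, Q.toSet ⊆ R.toSet → P.toSet ⊆ R.toSet

/-- The separated-bump entropy functional
`ϱ_σ^{α,p,q}(Q) = σ(Q)^{-q/p} ∫_Q M_α(1_Q σ)^{q/p}`. -/
def sepRho {n : ℕ} (α p q : ℝ) (σ : (Fin n → ℝ) → ℝ≥0∞) (Q : Cube n) : ℝ≥0∞ :=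
  (∫⁻ x in Q.toSet, fracMax α (Q.toSet.indicator σ) x ^ (q / p)) / wt σ Q ^ (q / p)

/-- The separated entropy bump constant `[[σ,w]]_{α,p,q}` with bump function `ε`. -/
def sepBump {n : ℕ} (α p q : ℝ) (ε : ℝ → ℝ) (σ w : (Fin n → ℝ) → ℝ≥0∞) : ℝ≥0∞ :=
  ⨆ Q : Cube n,
    (ENNReal.ofReal (Q.vol ^ (α / (n : ℝ))) * lebAvg σ Q) ^ (q * (1 - 1 / p)) *
      lebAvg w Q * sepRho α p q σ Q * ENNReal.ofReal (ε (sepRho α p q σ Q).toReal)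

/-- The one-bump entropy quantity for the fractional maximal operator:
`β(Q) = |Q|^{α/n-1} σ(Q)^{1/p'} w(Q)^{1/q} ρ_σ(Q)^{1/p} ε_q(ρ_σ(Q))`. -/
def maxBump {n : ℕ} (α p q : ℝ) (εq : ℝ → ℝ) (σ w : (Fin n → ℝ) → ℝ≥0∞)
    (Q : Cube n) : ℝ≥0∞ :=
  ENNReal.ofReal (Q.vol ^ (α / (n : ℝ) - 1)) * wt σ Q ^ (1 - 1 / p) * wt w Q ^ (1 / q) *
    entropy σ Q ^ (1 / p) * ENNReal.ofReal (εq (entropy σ Q).toReal)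

/-- The one-bump entropy quantity for the fractional integral operator:
`β(Q) = |Q|^{α/n-1} σ(Q)^{1/p'} w(Q)^{1/q} ρ_σ(Q)^{1/p} ε_p(ρ_σ(Q)) ρ_w(Q)^{1/q'} ε_{q'}(ρ_w(Q))`. -/
def intBump {n : ℕ} (α p q : ℝ) (εp εq' : ℝ → ℝ) (σ w : (Fin n → ℝ) → ℝ≥0∞)
    (Q : Cube n) : ℝ≥0∞ :=
  ENNReal.ofReal (Q.vol ^ (α / (n : ℝ) - 1)) * wt σ Q ^ (1 - 1 / p) * wt w Q ^ (1 / q) *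
    entropy σ Q ^ (1 / p) * ENNReal.ofReal (εp (entropy σ Q).toReal) *
    entropy w Q ^ (1 - 1 / q) * ENNReal.ofReal (εq' (entropy w Q).toReal)

lemma Cube.measurableSet_toSet {n : ℕ} (Q : Cube n) : MeasurableSet Q.toSet := by
  have : Q.toSet = ⋂ i, (fun x : Fin n → ℝ => x i) ⁻¹' Set.Ico (Q.corner i) (Q.corner i + Q.side) := by
    ext x; simp [Cube.toSet, Set.mem_Ico]
  rw [this]
  exact MeasurableSet.iInter fun i => (measurable_pi_apply i) measurableSet_Ico

lemma tsum_rpow_le {ι : Type*} (a : ι → ℝ≥0∞) {r : ℝ} (hr : 1 ≤ r) :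
    ∑' i, a i ^ r ≤ (∑' i, a i) ^ r := by
  set S := ∑' i, a i with hS
  have hr0 : 0 < r := lt_of_lt_of_le one_pos hr
  rcases eq_or_ne S ⊤ with h | h
  · rw [h, ENNReal.top_rpow_of_pos hr0]; exact le_top
  rcases eq_or_ne S 0 with h0 | h0
  · have : ∀ i, a i = 0 := fun i => by
      have := ENNReal.le_tsum (f := a) i
      rw [← hS, h0] at this; exact le_antisymm this bot_le
    simp [this, ENNReal.zero_rpow_of_pos hr0]
  calc ∑' i, a i ^ r ≤ ∑' i, a i * S ^ (r - 1) := by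
        refine ENNReal.tsum_le_tsum fun i => ?_
        rcases eq_or_ne (a i) 0 with hz | hz
        · simp [hz, ENNReal.zero_rpow_of_pos hr0]
        have hai : a i ≠ ⊤ := by
          exact ne_top_of_le_ne_top h (ENNReal.le_tsum i)
        calc a i ^ r = a i * a i ^ (r - 1) := by
              rw [show r = 1 + (r-1) by ring, ENNReal.rpow_add _ _ hz hai,
                ENNReal.rpow_one]; norm_num
          _ ≤ a i * S ^ (r - 1) := by
              gcongr
              exact ENNReal.le_tsum i
    _ = S * S ^ (r - 1) := by rw [ENNReal.tsum_mul_right]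
    _ = S ^ r := by
        rw [show r = 1 + (r-1) by ring, ENNReal.rpow_add _ _ h0 h,
          ENNReal.rpow_one]; norm_num

lemma per_cube {α : Type*} [MeasurableSpace α] (μ : Measure α) (s : Set α)
    (f : α → ℝ≥0∞) (hf : Measurable f) {p q : ℝ} (hp : 1 < p) (hpq : p ≤ q) :
    μ s ^ (q/p) * ((∫⁻ x in s, f x ∂μ) / μ s) ^ q ≤ (∫⁻ x in s, f x ^ p ∂μ) ^ (q/p) := by
  have hp0 : 0 < p := lt_trans one_pos hp
  have hq0 : 0 < q := lt_of_lt_of_le hp0 hpq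
  have hr0 : 0 < q / p := div_pos hq0 hp0
  set m := μ s with hm
  set I := ∫⁻ x in s, f x ∂μ with hI
  set A := ∫⁻ x in s, f x ^ p ∂μ with hA
  rcases eq_or_ne m 0 with h0 | h0
  · rw [h0, ENNReal.zero_rpow_of_pos hr0, zero_mul]; exact zero_le
  rcases eq_or_ne m ⊤ with ht | ht
  · rw [ht, ENNReal.div_top, ENNReal.zero_rpow_of_pos hq0, mul_zero]; exact zero_le
  rcases eq_or_ne A ⊤ with hAt | hAt
  · rw [hAt, ENNReal.top_rpow_of_pos hr0]; exact le_top
  set p' := Real.conjExponent p with hp'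
  have hconj : p.HolderConjugate p' := Real.HolderConjugate.conjExponent hp
  have hp'0 : 0 < p' := hconj.symm.pos
  have hHolder : I ≤ A ^ (1/p) * m ^ (1/p') := by
    have := ENNReal.lintegral_mul_le_Lp_mul_Lq (μ.restrict s) hconj
      hf.aemeasurable (aemeasurable_const (b := (1:ℝ≥0∞)))
    simpa [setLIntegral_const, ENNReal.one_rpow, one_div] using this
  rcases eq_or_ne A 0 with hA0 | hA0
  · have hI0 : I = 0 := by
      have h2 := hHolder
      rw [hA0, ENNReal.zero_rpow_of_pos (by positivity : (0:ℝ) < 1/p), zero_mul] at h2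
      exact le_antisymm h2 zero_le
    rw [hI0, ENNReal.zero_div, ENNReal.zero_rpow_of_pos hq0, mul_zero]
    exact zero_le
  have hmr0 : m ^ q ≠ 0 := by simp [ENNReal.rpow_eq_zero_iff, h0, ht]
  have hmrt : m ^ q ≠ ⊤ := ENNReal.rpow_ne_top_of_nonneg hq0.le ht
  have hsum : q/p + q/p' = q := by
    have h1 := hconj.inv_add_inv_eq_one
    have h2 : q/p + q/p' = (p⁻¹ + p'⁻¹) * q := by field_simp
    rw [h2, h1, one_mul]
  calc m ^ (q/p) * (I / m) ^ q
      ≤ m ^ (q/p) * ((A ^ (1/p) * m ^ (1/p')) / m) ^ q := by gcongr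
    _ = A ^ (q/p) := by
        rw [ENNReal.div_rpow_of_nonneg _ _ hq0.le,
          ENNReal.mul_rpow_of_ne_top (ENNReal.rpow_ne_top_of_nonneg (by positivity) hAt)
            (ENNReal.rpow_ne_top_of_nonneg (le_of_lt (by positivity : (0:ℝ) < 1/p')) ht),
          ← ENNReal.rpow_mul A, ← ENNReal.rpow_mul m,
          show (1/p*q : ℝ) = q/p by ring, show (1/p'*q : ℝ) = q/p' by ring,
          ← ENNReal.rpow_one m]
        rw [ENNReal.rpow_one m] -- undo; keep exponent q in denominator
        rw [mul_comm (A ^ (q/p)) (m ^ (q/p')), mul_div_assoc, ← mul_assoc,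
          ← ENNReal.rpow_add _ _ h0 ht, hsum, ← mul_div_assoc, mul_comm,
          mul_div_assoc, ENNReal.div_self hmr0 hmrt, mul_one]

lemma tsum_setLintegral_le {α : Type*} [MeasurableSpace α] (μ : Measure α)
    (g : α → ℝ≥0∞) {ι : Type*} (t : ι → Set α)
    (hmeas : ∀ i, MeasurableSet (t i)) (hdisj : Pairwise (Function.onFun Disjoint t)) :
    ∑' i, ∫⁻ x in t i, g x ∂μ ≤ ∫⁻ x, g x ∂μ := by
  rw [ENNReal.tsum_eq_iSup_sum]
  refine iSup_le fun F => ?_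
  rw [← lintegral_biUnion_finset (fun i _ j _ hij => hdisj hij) (fun i _ => hmeas i)]
  exact lintegral_mono_set (subset_univ _) |>.trans_eq (by rw [Measure.restrict_univ])

lemma tsum_measure_le {α : Type*} [MeasurableSpace α] (μ : Measure α)
    {ι : Type*} (t : ι → Set α) (P : Set α)
    (hmeas : ∀ i, MeasurableSet (t i)) (hdisj : Pairwise (Function.onFun Disjoint t))
    (hsub : ∀ i, t i ⊆ P) :
    ∑' i, μ (t i) ≤ μ P := by
  rw [ENNReal.tsum_eq_iSup_sum]
  refine iSup_le fun F => ?_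
  rw [← measure_biUnion_finset (fun i _ j _ hij => hdisj hij) (fun i _ => hmeas i)]
  exact measure_mono (Set.iUnion₂_subset fun i _ => hsub i)

/-- for a pairwise disjoint family of dyadic cubes, `a_Q = σ(Q)^{q/p}` is a
`(p,q)`-Carleson sequence, and the corresponding embedding holds. -/

theorem stmt19 (p q : ℝ) (hp : 1 < p) (hpq : p ≤ q) :
    ∃ C : ℝ≥0∞, C ≠ ∞ ∧
    ∀ (n : ℕ) (μ : Measure (Fin n → ℝ)), IsLocallyFiniteMeasure μ →
    ∀ (D : Set (Cube n)), IsDyadicGrid D →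
    ∀ Dl : Set (Cube n), Dl ⊆ D →
      (∀ Q ∈ Dl, ∀ R ∈ Dl, Q ≠ R → Disjoint Q.toSet R.toSet) →
      (∀ f : (Fin n → ℝ) → ℝ≥0∞, Measurable f →
        (∑' Q : Dl, μ Q.1.toSet ^ (q/p) * avg μ f Q.1 ^ q)
          ≤ C * (∫⁻ x, f x ^ p ∂μ) ^ (q/p)) ∧
      (∀ P ∈ D, (∑' Q : {Q : Cube n // Q ∈ Dl ∧ Q.toSet ⊆ P.toSet},
          μ Q.1.toSet ^ (q/p)) ≤ μ P.toSet ^ (q/p)) := by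
  refine ⟨1, one_ne_top, ?_⟩
  intro n μ _ D hD Dl hDlD hdisj
  have hp0 : 0 < p := lt_trans one_pos hp
  have hq0 : 0 < q := lt_of_lt_of_le hp0 hpq
  have hr1 : 1 ≤ q / p := (one_le_div hp0).2 hpq
  constructor
  · intro f hf
    rw [one_mul]
    have hdisj' : Pairwise (Function.onFun Disjoint fun Q : Dl => Q.1.toSet) :=
      fun Q R hne => hdisj Q.1 Q.2 R.1 R.2 (fun h => hne (Subtype.ext h))
    calc ∑' Q : Dl, μ Q.1.toSet ^ (q/p) * avg μ f Q.1 ^ q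
        ≤ ∑' Q : Dl, (∫⁻ x in Q.1.toSet, f x ^ p ∂μ) ^ (q/p) :=
          ENNReal.tsum_le_tsum fun Q => per_cube μ Q.1.toSet f hf hp hpq
      _ ≤ (∑' Q : Dl, ∫⁻ x in Q.1.toSet, f x ^ p ∂μ) ^ (q/p) := tsum_rpow_le _ hr1
      _ ≤ (∫⁻ x, f x ^ p ∂μ) ^ (q/p) := by
          refine ENNReal.rpow_le_rpow ?_ (le_trans zero_le_one hr1)
          exact tsum_setLintegral_le μ _ _ (fun Q => Q.1.measurableSet_toSet) hdisj'
  · intro P hP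
    have hdisj'' : Pairwise (Function.onFun Disjoint
        fun Q : {Q : Cube n // Q ∈ Dl ∧ Q.toSet ⊆ P.toSet} => Q.1.toSet) :=
      fun Q R hne => hdisj Q.1 Q.2.1 R.1 R.2.1 (fun h => hne (Subtype.ext h))
    calc ∑' Q : {Q : Cube n // Q ∈ Dl ∧ Q.toSet ⊆ P.toSet}, μ Q.1.toSet ^ (q/p)
        ≤ (∑' Q : {Q : Cube n // Q ∈ Dl ∧ Q.toSet ⊆ P.toSet}, μ Q.1.toSet) ^ (q/p) :=
          tsum_rpow_le _ hr1
      _ ≤ μ P.toSet ^ (q/p) := by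
          refine ENNReal.rpow_le_rpow ?_ (le_trans zero_le_one hr1)
          exact tsum_measure_le μ _ P.toSet (fun Q => Q.1.measurableSet_toSet)
            hdisj'' (fun Q => Q.2.2)
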